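/- Let G be a finite simple graph equipped with a type-2A crossing structure, let S be a set of vertices of G, and let F and F' be two distinct connected components of G − S. If a and b are vertices of F with ab an edge of G, and c and d are vertices of F' with cd an edge of G, then the edges ab and cd do not cross. -/
import Mathlib


/-- The associated edges of a crossing pair `ab`, `cd`: those of the vertex pairs
`ac`, `ad`, `bc`, `bd` that are edges of `G`. -/
def AssocEdges {V : Type*} (G : SimpleGraph V) (a b c d : V) : Set (Sym2 V) :=
  {e | e ∈ ({s(a, c), s(a, d), s(b, c), s(b, d)} : Set (Sym2 V)) ∧ e ∈ G.edgeSet}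

/-- A crossing structure on a simple graph `G`: a symmetric irreflexive relation on
unordered pairs of vertices that relates only edges of `G`, and whenever it relates
two edges, these edges have four pairwise distinct endpoints. -/
structure IsCrossingStructure {V : Type*} (G : SimpleGraph V)
    (Cross : Sym2 V → Sym2 V → Prop) : Prop where
  symm : ∀ e f, Cross e f → Cross f e
  irrefl : ∀ e, ¬ Cross e e
  edge_mem : ∀ e f, Cross e f → e ∈ G.edgeSet ∧ f ∈ G.edgeSet
  distinct : ∀ a b c d, Cross s(a, b) s(c, d) →
    a ≠ b ∧ a ≠ c ∧ a ≠ d ∧ b ≠ c ∧ b ≠ d ∧ c ≠ d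

/-- A crossing structure is type-2A if every crossing pair has at least two associated
edges, and whenever a crossing pair has exactly two associated edges, these two edges
share no endpoint (i.e. they are the pair `ac, bd` or the pair `ad, bc`). -/
def IsType2A {V : Type*} (G : SimpleGraph V) (Cross : Sym2 V → Sym2 V → Prop) : Prop :=
  ∀ a b c d, Cross s(a, b) s(c, d) →
    2 ≤ (AssocEdges G a b c d).ncard ∧
      ((AssocEdges G a b c d).ncard = 2 →
        (G.Adj a c ∧ G.Adj b d) ∨ (G.Adj a d ∧ G.Adj b c))

/-- A crossing structure is 1-planar if every edge crosses at most one other edge. -/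
def IsOnePlanar {V : Type*} (Cross : Sym2 V → Sym2 V → Prop) : Prop :=
  ∀ e f g, Cross e f → Cross e g → f = g

/-- A crossing structure is nice if no associated edge of a crossing pair crosses any edge. -/
def IsNice {V : Type*} (G : SimpleGraph V) (Cross : Sym2 V → Sym2 V → Prop) : Prop :=
  ∀ a b c d, Cross s(a, b) s(c, d) →
    ∀ e ∈ AssocEdges G a b c d, ∀ f, ¬ Cross e f

/-- An edge is crossed if it crosses some edge. -/
def IsCrossed {V : Type*} (Cross : Sym2 V → Sym2 V → Prop) (e : Sym2 V) : Prop :=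
  ∃ f, Cross e f

/-- for a vertex set `S` and distinct components `F`, `F'` of `G − S`,
an edge of `G` inside `F` never crosses an edge of `G` inside `F'`. -/
theorem statement2 {V : Type*} [Fintype V] (G : SimpleGraph V)
    (Cross : Sym2 V → Sym2 V → Prop)
    (hC : IsCrossingStructure G Cross) (h2A : IsType2A G Cross)
    (S : Set V)
    (F F' : (G.induce (Sᶜ : Set V)).ConnectedComponent) (hFF' : F ≠ F')
    (a b : (Sᶜ : Set V)) (ha : a ∈ F.supp) (hb : b ∈ F.supp)
    (hab : G.Adj (a : V) (b : V))
    (c d : (Sᶜ : Set V)) (hc : c ∈ F'.supp) (hd : d ∈ F'.supp)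
    (hcd : G.Adj (c : V) (d : V)) :
    ¬ Cross s((a : V), (b : V)) s((c : V), (d : V)) := by
  intro hcr
  -- Any associated edge joins a vertex of F to a vertex of F', forcing F = F'.
  have key : ∀ (x y : (Sᶜ : Set V)), x ∈ F.supp → y ∈ F'.supp →
      G.Adj (x : V) (y : V) → False := by
    intro x y hx hy hadj
    have hadj' : (G.induce (Sᶜ : Set V)).Adj x y := by
      simp [SimpleGraph.comap_adj, hadj]
    rw [SimpleGraph.ConnectedComponent.mem_supp_iff] at hx hy
    exact hFF' (hx ▸ hy ▸ SimpleGraph.ConnectedComponent.eq.mpr hadj'.reachable)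
  obtain ⟨h2, -⟩ := h2A a b c d hcr
  have hne : (AssocEdges G a b c d).Nonempty := by
    apply Set.nonempty_of_ncard_ne_zero; omega
  obtain ⟨e, hmem, hedge⟩ := hne
  rcases hmem with h | h | h | h <;> subst h <;>
    rw [SimpleGraph.mem_edgeSet] at hedge
  · exact (key a c ha hc hedge).elim
  · exact (key a d ha hd hedge).elim
  · exact (key b c hb hc hedge).elim
  · exact (key b d hb hd hedge).elim
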